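/- For every integer n ≥ 0 and every set B ⊆ [n], the number of permutations in Av_n(213) with descent bottom set B, the number of permutations in Av_n(231) with descent bottom set B, and the number of permutations in Av_n(312) with descent bottom set B are all equal. (Equivalently, the patterns 213, 231, 312 are Desbot-Wilf equivalent.) -/

import Mathlib

open scoped Classical

/-- The 1-based `i`-th entry of a permutation `σ` of `{1,…,n}`, as a value in `{1,…,n}`
(one-line notation `σ(1)…σ(n)`). -/
def entry {n : ℕ} (σ : Equiv.Perm (Fin n)) (i : ℕ) : ℕ :=
  if h : i - 1 < n then (σ ⟨i - 1, h⟩ : ℕ) + 1 else 0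

/-- `σ` contains the pattern `π ∈ S_k` (given in 0-based one-line notation as a function):
there is a (not necessarily consecutive) subsequence of `σ` order-isomorphic to `π`. -/
def Contains {n k : ℕ} (π : Fin k → Fin k) (σ : Equiv.Perm (Fin n)) : Prop :=
  ∃ f : Fin k → Fin n, StrictMono f ∧ ∀ i j : Fin k, π i < π j ↔ σ (f i) < σ (f j)

/-- `σ` avoids the pattern `π`. -/
def AvoidsPat {n k : ℕ} (π : Fin k → Fin k) (σ : Equiv.Perm (Fin n)) : Prop :=
  ¬ Contains π σ

/-- The descent set of `σ` (1-based positions `i ∈ [n-1]` with `σ(i) > σ(i+1)`). -/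
def Des {n : ℕ} (σ : Equiv.Perm (Fin n)) : Finset ℕ :=
  (Finset.Icc 1 (n - 1)).filter (fun i => entry σ (i + 1) < entry σ i)

/-- The descent top set of `σ`: `{σ(i) : i ∈ Des σ}`. -/
def Destop {n : ℕ} (σ : Equiv.Perm (Fin n)) : Finset ℕ :=
  (Des σ).image (entry σ)

/-- The descent bottom set of `σ`: `{σ(i+1) : i ∈ Des σ}`. -/
def Desbot {n : ℕ} (σ : Equiv.Perm (Fin n)) : Finset ℕ :=
  (Des σ).image (fun i => entry σ (i + 1))

/-- The ascent set of `σ` (1-based positions `i ∈ [n-1]` with `σ(i) < σ(i+1)`). -/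
def Asc {n : ℕ} (σ : Equiv.Perm (Fin n)) : Finset ℕ :=
  (Finset.Icc 1 (n - 1)).filter (fun i => entry σ i < entry σ (i + 1))

/-- The ascent top set of `σ`: `{σ(i+1) : i ∈ Asc σ}`. -/
def Asctop {n : ℕ} (σ : Equiv.Perm (Fin n)) : Finset ℕ :=
  (Asc σ).image (fun i => entry σ (i + 1))

/-- The ascent bottom set of `σ`: `{σ(i) : i ∈ Asc σ}`. -/
def Ascbot {n : ℕ} (σ : Equiv.Perm (Fin n)) : Finset ℕ :=
  (Asc σ).image (entry σ)

/-- The set of peak values of `σ`. -/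
def Peak {n : ℕ} (σ : Equiv.Perm (Fin n)) : Finset ℕ :=
  Destop σ ∩ Asctop σ

/-- The set of valley values of `σ`. -/
def Val {n : ℕ} (σ : Equiv.Perm (Fin n)) : Finset ℕ :=
  Desbot σ ∩ Ascbot σ

/-- The set of left-to-right maxima (as values) of `σ`. -/
noncomputable def LRmax {n : ℕ} (σ : Equiv.Perm (Fin n)) : Finset ℕ :=
  ((Finset.Icc 1 n).filter (fun i => ∀ j, 1 ≤ j → j < i → entry σ j < entry σ i)).image (entry σ)

/-- The set of left-to-right minima (as values) of `σ`. -/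
noncomputable def LRmin {n : ℕ} (σ : Equiv.Perm (Fin n)) : Finset ℕ :=
  ((Finset.Icc 1 n).filter (fun i => ∀ j, 1 ≤ j → j < i → entry σ i < entry σ j)).image (entry σ)

/-- The set of right-to-left maxima (as values) of `σ`. -/
noncomputable def RLmax {n : ℕ} (σ : Equiv.Perm (Fin n)) : Finset ℕ :=
  ((Finset.Icc 1 n).filter (fun i => ∀ j, i < j → j ≤ n → entry σ j < entry σ i)).image (entry σ)

/-- The set of right-to-left minima (as values) of `σ`. -/
noncomputable def RLmin {n : ℕ} (σ : Equiv.Perm (Fin n)) : Finset ℕ :=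
  ((Finset.Icc 1 n).filter (fun i => ∀ j, i < j → j ≤ n → entry σ i < entry σ j)).image (entry σ)

/-- `(T, B)` is a descent matching: `T` and `B` are finite sets of positive integers
with `|T| = |B| = k`, and writing `T = {t_1 < … < t_k}`, `B = {b_1 < … < b_k}`,
we have `t_i > b_i` for all `i ∈ [k]`. -/
def DescentMatching (T B : Finset ℕ) : Prop :=
  T.card = B.card ∧ (∀ t ∈ T, 0 < t) ∧ (∀ b ∈ B, 0 < b) ∧
    ∀ i < T.card, (B.sort (· ≤ ·)).getD i 0 < (T.sort (· ≤ ·)).getD i 0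

/-- `(2_v 31)σ`: the number of occurrences of the vincular pattern `2-31` in `σ`
in which the "2" has value `v`. -/
def occ2_31at {n : ℕ} (σ : Equiv.Perm (Fin n)) (v : ℕ) : ℕ :=
  ((Finset.Icc 1 (n - 1) ×ˢ Finset.Icc 1 (n - 1)).filter
    (fun p => p.1 < p.2 ∧ entry σ (p.2 + 1) < entry σ p.2 ∧
      entry σ (p.2 + 1) < entry σ p.1 ∧ entry σ p.1 = v ∧ v < entry σ p.2)).card

/-- `(31 2_v)σ`: the number of occurrences of the vincular pattern `31-2` in `σ`
in which the "2" has value `v`. -/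
def occ31_2at {n : ℕ} (σ : Equiv.Perm (Fin n)) (v : ℕ) : ℕ :=
  ((Finset.Icc 1 (n - 1) ×ˢ Finset.Icc 1 n).filter
    (fun p => p.1 + 1 < p.2 ∧ entry σ (p.1 + 1) < entry σ p.1 ∧
      entry σ (p.1 + 1) < entry σ p.2 ∧ entry σ p.2 = v ∧ v < entry σ p.1)).card

/-- `(2-31)σ`: the number of occurrences of the vincular pattern `2-31` in `σ`. -/
def occ2_31 {n : ℕ} (σ : Equiv.Perm (Fin n)) : ℕ :=
  ((Finset.Icc 1 (n - 1) ×ˢ Finset.Icc 1 (n - 1)).filter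
    (fun p => p.1 < p.2 ∧ entry σ (p.2 + 1) < entry σ p.2 ∧
      entry σ (p.2 + 1) < entry σ p.1 ∧ entry σ p.1 < entry σ p.2)).card

/-- `(31-2)σ`: the number of occurrences of the vincular pattern `31-2` in `σ`. -/
def occ31_2 {n : ℕ} (σ : Equiv.Perm (Fin n)) : ℕ :=
  ((Finset.Icc 1 (n - 1) ×ˢ Finset.Icc 1 n).filter
    (fun p => p.1 + 1 < p.2 ∧ entry σ (p.1 + 1) < entry σ p.1 ∧
      entry σ (p.1 + 1) < entry σ p.2 ∧ entry σ p.2 < entry σ p.1)).card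

/-- The signature function `sg_{(T,B)}(i) = |B_{<i}| - |T_{≤i}| + 1`. -/
def sg (T B : Finset ℕ) (i : ℕ) : ℕ :=
  (B.filter (fun b => b < i)).card - (T.filter (fun t => t ≤ i)).card + 1

/-- The `(p,q)`-integer `[m]_{p,q} = Σ_{a+b=m-1} p^a q^b`. -/
def genQInt {R : Type*} [CommRing R] (m : ℕ) (p q : R) : R :=
  ∑ a ∈ Finset.range m, p ^ a * q ^ (m - 1 - a)

/-- The reverse complement of `σ`: `σ^{rc}(i) = n + 1 - σ(n + 1 - i)`. -/
def revComp {n : ℕ} (σ : Equiv.Perm (Fin n)) : Equiv.Perm (Fin n) :=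
  (Fin.revPerm.trans σ).trans Fin.revPerm

namespace DWAux

local infixl:50 " <+ " => List.Sublist

/-- descent bottoms of a list -/
def dbl : List ℕ → Finset ℕ
  | [] => ∅
  | [_] => ∅
  | a :: b :: t => if b < a then insert b (dbl (b :: t)) else dbl (b :: t)

def Av (p : ℕ → ℕ → ℕ → Prop) (l : List ℕ) : Prop :=
  ∀ x y z : ℕ, [x, y, z] <+ l → ¬ p x y z

def P213 (x y z : ℕ) : Prop := y < x ∧ x < z
def P231 (x y z : ℕ) : Prop := x < y ∧ z < x
def P312 (x y z : ℕ) : Prop := y < z ∧ z < x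

theorem Av.sublist {p} {l l' : List ℕ} (h : l' <+ l) (hl : Av p l) : Av p l' :=
  fun x y z hs => hl x y z (hs.trans h)

@[simp] theorem dbl_nil : dbl [] = ∅ := rfl
@[simp] theorem dbl_single (a : ℕ) : dbl [a] = ∅ := rfl
theorem dbl_cons_cons (a b : ℕ) (t : List ℕ) :
    dbl (a :: b :: t) = if b < a then insert b (dbl (b :: t)) else dbl (b :: t) := rfl

theorem dbl_cons (a : ℕ) {W : List ℕ} (hW : W ≠ []) :
    dbl (a :: W) = if W.headD 0 < a then insert (W.headD 0) (dbl W) else dbl W := by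
  cases W with
  | nil => simp at hW
  | cons b t => simp [dbl_cons_cons]

theorem dbl_append {u : List ℕ} (v : List ℕ) (hu : u ≠ []) :
    dbl (u ++ v) = (if v ≠ [] ∧ v.headD 0 < u.getLastD 0 then insert (v.headD 0) (dbl v)
      else dbl v) ∪ dbl u := by
  induction u with
  | nil => simp at hu
  | cons x u ih =>
    cases u with
    | nil =>
      cases v with
      | nil => simp
      | cons b t => simp [dbl_cons_cons]
    | cons y u' =>
      have h2 : (y :: u') ++ v = y :: (u' ++ v) := rfl
      have hne : (y :: u') ++ v ≠ [] := by simp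
      rw [List.cons_append, dbl_cons x hne, ih (by simp), dbl_cons_cons]
      have hh : ((y :: u') ++ v).headD 0 = y := rfl
      rw [hh]
      have hl : (x :: y :: u').getLastD 0 = (y :: u').getLastD 0 := by
        simp [List.getLastD]
      rw [hl]
      by_cases hxy : y < x <;> simp [hxy, Finset.union_assoc, Finset.insert_union,
        Finset.union_insert, Finset.union_comm, Finset.union_left_comm]

theorem headD_mem {l : List ℕ} (h : l ≠ []) : l.headD 0 ∈ l := by
  cases l with
  | nil => simp at h
  | cons a t => simp

theorem getLastD_mem {l : List ℕ} (h : l ≠ []) : l.getLastD 0 ∈ l := by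
  cases l with
  | nil => simp at h
  | cons a t =>
    rw [List.getLastD_eq_getLast?, List.getLast?_eq_getLast (by simp)]
    simp [List.getLast_mem]

/-- splitting a pair sublist of an append -/
theorem pair_sublist_append {y z : ℕ} {X Y : List ℕ} (h : [y, z] <+ X ++ Y) :
    [y, z] <+ X ∨ (y ∈ X ∧ z ∈ Y) ∨ [y, z] <+ Y := by
  rw [List.sublist_append_iff] at h
  obtain ⟨l₁, l₂, he, h1, h2⟩ := h
  rcases l₁ with _ | ⟨a, _ | ⟨b, _ | ⟨c, w⟩⟩⟩
  · rw [List.nil_append] at he; right; right; rw [he]; exact h2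
  · obtain ⟨rfl, h2'⟩ : y = a ∧ [z] = l₂ := by simpa using he
    subst h2'
    exact Or.inr (Or.inl ⟨List.singleton_sublist.mp h1, List.singleton_sublist.mp h2⟩)
  · obtain ⟨rfl, rfl, h2'⟩ : y = a ∧ z = b ∧ l₂ = [] := by simpa using he
    subst h2'
    exact Or.inl h1
  · exfalso
    have := congrArg List.length he
    simp at this

/-- splitting a triple sublist of an append -/
theorem triple_sublist_append {x y z : ℕ} {X Y : List ℕ} (h : [x, y, z] <+ X ++ Y) :
    [x, y, z] <+ X ∨ ([x, y] <+ X ∧ z ∈ Y) ∨ (x ∈ X ∧ [y, z] <+ Y) ∨ [x, y, z] <+ Y := by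
  rw [List.sublist_append_iff] at h
  obtain ⟨l₁, l₂, he, h1, h2⟩ := h
  rcases l₁ with _ | ⟨a, _ | ⟨b, _ | ⟨c, _ | ⟨d, w⟩⟩⟩⟩
  · rw [List.nil_append] at he; right; right; right; rw [he]; exact h2
  · obtain ⟨rfl, h2'⟩ : x = a ∧ [y, z] = l₂ := by simpa using he
    subst h2'
    exact Or.inr (Or.inr (Or.inl ⟨List.singleton_sublist.mp h1, h2⟩))
  · obtain ⟨rfl, rfl, h2'⟩ : x = a ∧ y = b ∧ [z] = l₂ := by simpa using he
    subst h2'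
    exact Or.inr (Or.inl ⟨h1, List.singleton_sublist.mp h2⟩)
  · obtain ⟨rfl, rfl, rfl, h2'⟩ : x = a ∧ y = b ∧ z = c ∧ l₂ = [] := by simpa using he
    subst h2'
    exact Or.inl h1
  · exfalso
    have := congrArg List.length he
    simp at this


theorem mem_of_pair_left {y z : ℕ} {X : List ℕ} (h : [y, z] <+ X) : y ∈ X :=
  h.subset (by simp)

theorem mem_of_pair_right {y z : ℕ} {X : List ℕ} (h : [y, z] <+ X) : z ∈ X :=
  h.subset (by simp)

theorem triple_sublist_cons {x y z a : ℕ} {W : List ℕ} (h : [x, y, z] <+ a :: W) :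
    [x, y, z] <+ W ∨ (x = a ∧ [y, z] <+ W) := by
  rcases List.sublist_cons_iff.mp h with h' | ⟨r, hr, hr'⟩
  · exact Or.inl h'
  · obtain ⟨rfl, h2⟩ : x = a ∧ r = [y, z] := by
      constructor
      · exact (List.cons.injEq _ _ _ _ ▸ hr).1
      · exact ((List.cons.injEq _ _ _ _ ▸ hr).2).symm
    subst h2
    exact Or.inr ⟨rfl, hr'⟩

theorem pair_sublist_cons {y z a : ℕ} {W : List ℕ} (h : [y, z] <+ a :: W) :
    [y, z] <+ W ∨ (y = a ∧ z ∈ W) := by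
  rcases List.sublist_cons_iff.mp h with h' | ⟨r, hr, hr'⟩
  · exact Or.inl h'
  · obtain ⟨rfl, h2⟩ : y = a ∧ r = [z] := by
      constructor
      · exact (List.cons.injEq _ _ _ _ ▸ hr).1
      · exact ((List.cons.injEq _ _ _ _ ▸ hr).2).symm
    subst h2
    exact Or.inr ⟨rfl, List.singleton_sublist.mp hr'⟩

/-- assembling a 213-avoider of shape `a :: X ++ Y` with `X > a > Y`. -/
theorem av213_assemble {a : ℕ} {X Y : List ℕ} (hX : ∀ x ∈ X, a < x) (hY : ∀ y ∈ Y, y < a)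
    (aX : Av P213 X) (aY : Av P213 Y) : Av P213 (a :: (X ++ Y)) := by
  intro x y z hs hp
  obtain ⟨h1, h2⟩ := hp
  rcases triple_sublist_cons hs with h | ⟨rfl, hp2⟩
  · rcases triple_sublist_append h with h | ⟨hxy, hz⟩ | ⟨hx, hyz⟩ | h
    · exact aX x y z h ⟨h1, h2⟩
    · exact absurd h2 (by have := hX x (mem_of_pair_left hxy); have := hY z hz; omega)
    · exact absurd h2 (by have := hX x hx; have := hY z (mem_of_pair_right hyz); omega)
    · exact aY x y z h ⟨h1, h2⟩
  · rcases pair_sublist_append hp2 with h | ⟨hy, hz⟩ | h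
    · have := hX y (mem_of_pair_left h); omega
    · have := hX y hy; omega
    · have := hY z (mem_of_pair_right h); omega

/-- assembling a 231-avoider of shape `a :: X ++ Y` with `X < a < Y`. -/
theorem av231_assemble {a : ℕ} {X Y : List ℕ} (hX : ∀ x ∈ X, x < a) (hY : ∀ y ∈ Y, a < y)
    (aX : Av P231 X) (aY : Av P231 Y) : Av P231 (a :: (X ++ Y)) := by
  intro x y z hs hp
  obtain ⟨h1, h2⟩ := hp
  rcases triple_sublist_cons hs with h | ⟨rfl, hp2⟩
  · rcases triple_sublist_append h with h | ⟨hxy, hz⟩ | ⟨hx, hyz⟩ | h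
    · exact aX x y z h ⟨h1, h2⟩
    · exact absurd h2 (by have := hX x (mem_of_pair_left hxy); have := hY z hz; omega)
    · exact absurd h2 (by have := hX x hx; have := hY z (mem_of_pair_right hyz); omega)
    · exact aY x y z h ⟨h1, h2⟩
  · rcases pair_sublist_append hp2 with h | ⟨hy, hz⟩ | h
    · have := hX y (mem_of_pair_left h); omega
    · have := hX y hy; omega
    · have := hY z (mem_of_pair_right h); omega

/-- assembling a 312-avoider of shape `X ++ m :: Y` with `m` minimal and `X < Y`. -/
theorem av312_assemble {m : ℕ} {X Y : List ℕ} (hX : ∀ x ∈ X, m < x) (hY : ∀ y ∈ Y, m < y)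
    (hXY : ∀ x ∈ X, ∀ y ∈ Y, x < y)
    (aX : Av P312 X) (aY : Av P312 Y) : Av P312 (X ++ m :: Y) := by
  intro x y z hs hp
  obtain ⟨h1, h2⟩ := hp
  rcases triple_sublist_append hs with h | ⟨hxy, hz⟩ | ⟨hx, hyz⟩ | h
  · exact aX x y z h ⟨h1, h2⟩
  · rcases List.mem_cons.mp hz with rfl | hz
    · have := hX y (mem_of_pair_right hxy); omega
    · have := hXY x (mem_of_pair_left hxy) z hz; omega
  · rcases pair_sublist_cons hyz with h | ⟨rfl, hz⟩
    · have := hXY x hx z (mem_of_pair_right h); omega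
    · have := hXY x hx z hz; omega
  · rcases triple_sublist_cons h with h | ⟨rfl, hp2⟩
    · exact aY x y z h ⟨h1, h2⟩
    · have := hY z (mem_of_pair_right hp2); omega

/-- assembling a 213-avoider of shape `X ++ m :: Y` with `m` minimal and `X > Y`. -/
theorem av213_assemble' {m : ℕ} {X Y : List ℕ} (hX : ∀ x ∈ X, m < x) (hY : ∀ y ∈ Y, m < y)
    (hXY : ∀ x ∈ X, ∀ y ∈ Y, y < x)
    (aX : Av P213 X) (aY : Av P213 Y) : Av P213 (X ++ m :: Y) := by
  intro x y z hs hp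
  obtain ⟨h1, h2⟩ := hp
  rcases triple_sublist_append hs with h | ⟨hxy, hz⟩ | ⟨hx, hyz⟩ | h
  · exact aX x y z h ⟨h1, h2⟩
  · rcases List.mem_cons.mp hz with rfl | hz
    · have := hX x (mem_of_pair_left hxy); omega
    · have := hXY x (mem_of_pair_left hxy) z hz; omega
  · rcases pair_sublist_cons hyz with h | ⟨rfl, hz⟩
    · have := hXY x hx z (mem_of_pair_right h); omega
    · have := hXY x hx z hz; omega
  · rcases triple_sublist_cons h with h | ⟨rfl, hp2⟩
    · exact aY x y z h ⟨h1, h2⟩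
    · have := hY y (mem_of_pair_left hp2); omega

/-- in a 231-avoider `a :: t`, the elements below `a` precede those above `a`. -/
theorem shape231 {a : ℕ} {t : List ℕ} (hav : Av P231 (a :: t)) (ha : a ∉ t) :
    t = t.filter (· < a) ++ t.filter (a < ·) := by
  induction t with
  | nil => simp
  | cons b t' ih =>
    have hab : a ≠ b := fun h => ha (h ▸ List.mem_cons_self)
    rcases lt_or_gt_of_ne hab with h | h
    · -- a < b : everything in t' is above a
      have hall : ∀ x ∈ t', a < x := by
        intro x hx
        by_contra hxa
        have hsub : [a, b, x] <+ a :: b :: t' := by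
          apply List.cons_sublist_cons.mpr
          apply List.cons_sublist_cons.mpr
          exact List.singleton_sublist.mpr hx
        refine hav a b x hsub ⟨h, ?_⟩
        have : x ≠ a := fun hxa' => ha (hxa' ▸ List.mem_cons_of_mem _ hx)
        omega
      have h1 : (b :: t').filter (· < a) = [] := by
        rw [List.filter_eq_nil_iff]
        intro x hx
        rcases List.mem_cons.mp hx with rfl | hx
        · simpa using not_lt.mpr h.le
        · simpa using not_lt.mpr (hall x hx).le
      have h2 : (b :: t').filter (a < ·) = b :: t' := by
        rw [List.filter_eq_self]
        intro x hx
        rcases List.mem_cons.mp hx with rfl | hx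
        · simpa using h
        · simpa using hall x hx
      rw [h1, h2, List.nil_append]
    · -- b < a
      have hsub : a :: t' <+ a :: b :: t' :=
        List.cons_sublist_cons.mpr (List.sublist_cons_self _ _)
      have ih' := ih (hav.sublist hsub) (fun h' => ha (List.mem_cons_of_mem _ h'))
      have hb1 : (b :: t').filter (· < a) = b :: t'.filter (· < a) := by
        simp [List.filter_cons, h]
      have hb2 : (b :: t').filter (a < ·) = t'.filter (a < ·) := by
        simp [List.filter_cons, not_lt.mpr h.le]
      rw [hb1, hb2, List.cons_append, ← ih']

/-- in a 213-avoider `a :: t`, the elements above `a` precede those below `a`. -/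
theorem shape213 {a : ℕ} {t : List ℕ} (hav : Av P213 (a :: t)) (ha : a ∉ t) :
    t = t.filter (a < ·) ++ t.filter (· < a) := by
  induction t with
  | nil => simp
  | cons b t' ih =>
    have hab : a ≠ b := fun h => ha (h ▸ List.mem_cons_self)
    rcases lt_or_gt_of_ne hab with h | h
    · -- a < b : b goes to the first block
      have hsub : a :: t' <+ a :: b :: t' :=
        List.cons_sublist_cons.mpr (List.sublist_cons_self _ _)
      have ih' := ih (hav.sublist hsub) (fun h' => ha (List.mem_cons_of_mem _ h'))
      have hb1 : (b :: t').filter (a < ·) = b :: t'.filter (a < ·) := by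
        simp [List.filter_cons, h]
      have hb2 : (b :: t').filter (· < a) = t'.filter (· < a) := by
        simp [List.filter_cons, not_lt.mpr h.le]
      rw [hb1, hb2, List.cons_append, ← ih']
    · -- b < a : everything in t' is below a
      have hall : ∀ x ∈ t', x < a := by
        intro x hx
        by_contra hxa
        have hsub : [a, b, x] <+ a :: b :: t' := by
          apply List.cons_sublist_cons.mpr
          apply List.cons_sublist_cons.mpr
          exact List.singleton_sublist.mpr hx
        refine hav a b x hsub ⟨h, ?_⟩
        have : x ≠ a := fun hxa' => ha (hxa' ▸ List.mem_cons_of_mem _ hx)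
        omega
      have h1 : (b :: t').filter (a < ·) = [] := by
        rw [List.filter_eq_nil_iff]
        intro x hx
        rcases List.mem_cons.mp hx with rfl | hx
        · simpa using not_lt.mpr h.le
        · simpa using not_lt.mpr (hall x hx).le
      have h2 : (b :: t').filter (· < a) = b :: t' := by
        rw [List.filter_eq_self]
        intro x hx
        rcases List.mem_cons.mp hx with rfl | hx
        · simpa using h
        · simpa using hall x hx
      rw [h1, h2, List.nil_append]

/-- minimum of a list of naturals -/
def mn : List ℕ → ℕ
  | [] => 0
  | [a] => a
  | a :: b :: t => min a (mn (b :: t))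

theorem mn_mem : ∀ {l : List ℕ}, l ≠ [] → mn l ∈ l := by
  intro l
  induction l with
  | nil => simp
  | cons a t ih =>
    intro _
    cases t with
    | nil => simp [mn]
    | cons b t' =>
      rcases le_total a (mn (b :: t')) with h | h
      · simp [mn, min_eq_left h]
      · simp only [mn, min_eq_right h]
        exact List.mem_cons_of_mem _ (ih (by simp))

theorem mn_le : ∀ {l : List ℕ}, ∀ x ∈ l, mn l ≤ x := by
  intro l
  induction l with
  | nil => simp
  | cons a t ih =>
    intro x hx
    cases t with
    | nil => simp at hx; simp [mn, hx]
    | cons b t' =>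
      rcases List.mem_cons.mp hx with rfl | hx
      · simp [mn]
      · simp only [mn]
        exact le_trans (min_le_right _ _) (ih x hx)

theorem mn_eq {l : List ℕ} {m : ℕ} (h1 : m ∈ l) (h2 : ∀ x ∈ l, m ≤ x) : mn l = m :=
  le_antisymm (mn_le m h1) (h2 _ (mn_mem (List.ne_nil_of_mem h1)))

theorem tw_eq {m : ℕ} {L R : List ℕ} (hL : ∀ x ∈ L, x ≠ m) :
    (L ++ m :: R).takeWhile (· ≠ m) = L ∧ (L ++ m :: R).dropWhile (· ≠ m) = m :: R := by
  induction L with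
  | nil => simp
  | cons a L' ih =>
    have ha : a ≠ m := hL a List.mem_cons_self
    have ih' := ih (fun x hx => hL x (List.mem_cons_of_mem _ hx))
    constructor
    · rw [List.cons_append, List.takeWhile_cons]
      simp only [ne_eq, decide_not] at ih' ⊢
      simp [ha, ih'.1]
    · rw [List.cons_append, List.dropWhile_cons]
      simp only [ne_eq, decide_not] at ih' ⊢
      simp [ha, ih'.2]

theorem len_tw {l : List ℕ} (h : l ≠ []) : (l.takeWhile (· ≠ mn l)).length < l.length := by
  have hd : l.dropWhile (· ≠ mn l) ≠ [] := by
    rw [Ne, List.dropWhile_eq_nil_iff]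
    push_neg
    exact ⟨mn l, mn_mem h, by simp⟩
  have := congrArg List.length (List.takeWhile_append_dropWhile (p := (· ≠ mn l)) (l := l))
  rw [List.length_append] at this
  have : 0 < (l.dropWhile (· ≠ mn l)).length := List.length_pos_iff.mpr hd
  omega

theorem len_dw {l : List ℕ} (h : l ≠ []) :
    ((l.dropWhile (· ≠ mn l)).tail).length < l.length := by
  have := congrArg List.length (List.takeWhile_append_dropWhile (p := (· ≠ mn l)) (l := l))
  rw [List.length_append] at this
  have h2 : (l.dropWhile (· ≠ mn l)).tail.length = (l.dropWhile (· ≠ mn l)).length - 1 :=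
    List.length_tail
  have h3 : 0 < l.length := List.length_pos_iff.mpr h
  omega

def Theta : List ℕ → List ℕ
  | [] => []
  | a :: t =>
    if ((a :: t).dropWhile (· ≠ mn (a :: t))).tail = [] then
      Theta ((a :: t).takeWhile (· ≠ mn (a :: t))) ++ [mn (a :: t)]
    else if (a :: t).takeWhile (· ≠ mn (a :: t)) = [] then
      mn (a :: t) :: Theta (((a :: t).dropWhile (· ≠ mn (a :: t))).tail)
    else
      Theta (((a :: t).dropWhile (· ≠ mn (a :: t))).tail) ++
        mn (a :: t) :: Theta ((a :: t).takeWhile (· ≠ mn (a :: t)))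
  termination_by l => l.length
  decreasing_by
    all_goals first
      | exact len_tw (by simp)
      | exact len_dw (by simp)

theorem theta_eq {m : ℕ} (L R : List ℕ) (hL : ∀ x ∈ L, m < x) (hR : ∀ x ∈ R, m < x) :
    Theta (L ++ m :: R) =
      if R = [] then Theta L ++ [m]
      else if L = [] then m :: Theta R
      else Theta R ++ m :: Theta L := by
  have hm : mn (L ++ m :: R) = m := by
    apply mn_eq (by simp)
    intro x hx
    rcases List.mem_append.mp hx with hx | hx
    · exact (hL x hx).le
    · rcases List.mem_cons.mp hx with rfl | hx
      · exact le_refl _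
      · exact (hR x hx).le
  have htw := tw_eq (m := m) (L := L) (R := R) (fun x hx => (hL x hx).ne')
  obtain ⟨a, t, hat⟩ := List.exists_cons_of_ne_nil (l := L ++ m :: R) (by simp)
  rw [hat, Theta, ← hat, hm, htw.1, htw.2, List.tail_cons]


def Phi : List ℕ → List ℕ
  | [] => []
  | a :: t => a :: (Phi (t.filter (a < ·)) ++ Phi (t.filter (· < a)))
  termination_by l => l.length
  decreasing_by
    all_goals
      simp only [List.length_cons, Nat.lt_succ_iff, List.length_unattach]
      exact (List.length_filter_le _ _).trans List.length_attach.le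

def Psi : List ℕ → List ℕ
  | [] => []
  | a :: t => a :: (Psi (t.filter (· < a)) ++ Psi (t.filter (a < ·)))
  termination_by l => l.length
  decreasing_by
    all_goals
      simp only [List.length_cons, Nat.lt_succ_iff, List.length_unattach]
      exact (List.length_filter_le _ _).trans List.length_attach.le

theorem Phi_headD : ∀ l : List ℕ, (Phi l).headD 0 = l.headD 0
  | [] => by rw [Phi]
  | a :: t => by rw [Phi]; rfl

theorem Psi_headD : ∀ l : List ℕ, (Psi l).headD 0 = l.headD 0
  | [] => by rw [Psi]
  | a :: t => by rw [Psi]; rfl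

theorem Theta_nil : Theta [] = [] := by rw [Theta]

theorem perm_ne_nil {l l' : List ℕ} (h : l.Perm l') (h2 : l ≠ []) : l' ≠ [] := by
  intro hn
  subst hn
  exact h2 h.eq_nil

theorem headD_append {u : List ℕ} (v : List ℕ) (hu : u ≠ []) :
    (u ++ v).headD 0 = u.headD 0 := by
  cases u with
  | nil => simp at hu
  | cons a t => rfl

theorem filters_perm {a : ℕ} {t : List ℕ} (ha : a ∉ t) :
    (t.filter (· < a) ++ t.filter (a < ·)).Perm t := by
  have hcg : t.filter (a < ·) = t.filter (fun x => !decide (x < a)) := by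
    apply List.filter_congr
    intro x hx
    have hxa : x ≠ a := fun h => ha (h ▸ hx)
    by_cases h : x < a <;> simp [h] <;> omega
  rw [hcg]
  exact List.filter_append_perm _ t

theorem filters_perm' {a : ℕ} {t : List ℕ} (ha : a ∉ t) :
    (t.filter (a < ·) ++ t.filter (· < a)).Perm t :=
  (List.perm_append_comm).trans (filters_perm ha)

theorem exists_min_split {l : List ℕ} (h : l ≠ []) (hn : l.Nodup) :
    ∃ L R, l = L ++ mn l :: R ∧ (∀ x ∈ L, mn l < x) ∧ (∀ x ∈ R, mn l < x) := by
  obtain ⟨L, R, hLR⟩ := List.mem_iff_append.mp (mn_mem h)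
  have hn' := hLR ▸ hn
  rw [List.nodup_append'] at hn'
  obtain ⟨hnL, hnR, hdisj⟩ := hn'
  have hmL : mn l ∉ L := fun hm => hdisj hm List.mem_cons_self
  have hmR : mn l ∉ R := (List.nodup_cons.mp hnR).1
  refine ⟨L, R, hLR, ?_, ?_⟩
  · intro x hx
    have h1 : mn l ≤ x := mn_le x (hLR ▸ List.mem_append_left _ hx)
    have h2 : x ≠ mn l := fun he => hmL (he ▸ hx)
    omega
  · intro x hx
    have h1 : mn l ≤ x := mn_le x (hLR ▸ List.mem_append_right _ (List.mem_cons_of_mem _ hx))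
    have h2 : x ≠ mn l := fun he => hmR (he ▸ hx)
    omega

theorem Av.nil {p} : Av p [] := fun _ _ _ hs => absurd hs.length_le (by simp)

theorem ins_union (x : ℕ) (s t : Finset ℕ) : insert x s ∪ t = insert x (t ∪ s) := by
  ext y; simp; tauto

/-- All properties of `Theta`, by strong induction on length. -/
theorem Theta_all : ∀ (N : ℕ) (l : List ℕ), l.length ≤ N → l.Nodup →
    (Theta l).Perm l ∧ dbl (Theta l) = dbl l ∧ Theta (Theta l) = l ∧
      (Av P213 l → Av P312 (Theta l)) ∧ (Av P312 l → Av P213 (Theta l)) := by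
  intro N
  induction N with
  | zero =>
    intro l hl _
    have : l = [] := List.length_eq_zero_iff.mp (Nat.le_zero.mp hl)
    subst this
    exact ⟨by simp [Theta_nil], by simp [Theta_nil], by simp [Theta_nil],
      fun _ => by rw [Theta_nil]; exact Av.nil, fun _ => by rw [Theta_nil]; exact Av.nil⟩
  | succ N ih =>
    intro l hl hn
    rcases eq_or_ne l [] with rfl | hne
    · exact ⟨by simp [Theta_nil], by simp [Theta_nil], by simp [Theta_nil],
        fun _ => by rw [Theta_nil]; exact Av.nil, fun _ => by rw [Theta_nil]; exact Av.nil⟩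
    obtain ⟨L, R, hLR, hLb, hRb⟩ := exists_min_split hne hn
    set m := mn l with hm
    have hlen := congrArg List.length hLR
    rw [List.length_append, List.length_cons] at hlen
    have hLlen : L.length ≤ N := by omega
    have hRlen : R.length ≤ N := by omega
    have hnL : L.Nodup := by
      rw [hLR, List.nodup_append] at hn; exact hn.1
    have hnR : R.Nodup := by
      rw [hLR, List.nodup_append, List.nodup_cons] at hn; exact hn.2.1.2
    have hdisj : ∀ x ∈ L, ∀ y ∈ R, x ≠ y := by
      rw [hLR, List.nodup_append'] at hn
      intro x hx y hy he
      exact hn.2.2 hx (List.mem_cons_of_mem _ (he ▸ hy))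
    obtain ⟨pL, dL, iL, aL1, aL2⟩ := ih L hLlen hnL
    obtain ⟨pR, dR, iR, aR1, aR2⟩ := ih R hRlen hnR
    have hTLb : ∀ x ∈ Theta L, m < x := fun x hx => hLb x (pL.subset hx)
    have hTRb : ∀ x ∈ Theta R, m < x := fun x hx => hRb x (pR.subset hx)
    have hth : Theta l = if R = [] then Theta L ++ [m] else if L = [] then m :: Theta R
        else Theta R ++ m :: Theta L := by
      rw [hLR]
      exact theta_eq L R hLb hRb
    have hsubL : L <+ l := by rw [hLR]; exact List.sublist_append_left _ _
    have hsubR : R <+ l := by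
      rw [hLR]
      exact ((List.sublist_cons_self m R).trans (List.sublist_append_right _ _))
    rcases eq_or_ne R [] with rfl | hR
    · -- l = L ++ [m]
      rw [if_pos rfl] at hth
      have hperm : (Theta l).Perm l := by
        rw [hth, hLR]
        exact pL.append (List.Perm.refl [m])
      refine ⟨hperm, ?_, ?_, ?_, ?_⟩
      · rcases eq_or_ne L [] with rfl | hL
        · rw [hth, hLR]
          simp [Theta_nil]
        · have hTL : Theta L ≠ [] := perm_ne_nil pL.symm hL
          rw [hth, hLR, dbl_append _ hTL, dbl_append _ hL, dL]
          have e1 : m < (Theta L).getLastD 0 := hTLb _ (getLastD_mem hTL)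
          have e2 : m < L.getLastD 0 := hLb _ (getLastD_mem hL)
          simp only [List.getLastD_eq_getLast?] at e1 e2
          simp [e1, e2]
      · rw [hth]
        rcases eq_or_ne L [] with rfl | hL
        · rw [hLR]
          have h1 : Theta ([] : List ℕ) ++ [m] = [m] := by simp [Theta_nil]
          rw [h1]
          have := theta_eq (m := m) [] [] (by simp) (by simp)
          simpa [Theta_nil] using this
        · have hTL : Theta L ≠ [] := perm_ne_nil pL.symm hL
          have h2 : Theta (Theta L ++ [m]) = Theta (Theta L) ++ [m] := by
            have := theta_eq (m := m) (Theta L) [] hTLb (by simp)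
            simpa using this
          rw [h2, iL, ← hLR]
      · intro hav
        rw [hth]
        have haL : Av P213 L := hav.sublist hsubL
        exact av312_assemble (m := m) (X := Theta L) (Y := []) hTLb (by simp)
          (by simp) (aL1 haL) Av.nil
      · intro hav
        rw [hth]
        have haL : Av P312 L := hav.sublist hsubL
        exact av213_assemble' (m := m) (X := Theta L) (Y := []) hTLb (by simp)
          (by simp) (aL2 haL) Av.nil
    rw [if_neg hR] at hth
    have hTR : Theta R ≠ [] := perm_ne_nil pR.symm hR
    have hheadR : m < R.headD 0 := hRb _ (headD_mem hR)
    have hheadTR : m < (Theta R).headD 0 := hTRb _ (headD_mem hTR)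
    rcases eq_or_ne L [] with rfl | hL
    · -- l = m :: R
      rw [if_pos rfl] at hth
      simp only [List.nil_append] at hLR
      refine ⟨?_, ?_, ?_, ?_, ?_⟩
      · rw [hth, hLR]
        exact pR.cons m
      · rw [hth, hLR, dbl_cons m hTR, dbl_cons m hR, if_neg (by omega), if_neg (by omega), dR]
      · rw [hth]
        have h2 : Theta (m :: Theta R) = m :: Theta (Theta R) := by
          have := theta_eq (m := m) [] (Theta R) (by simp) hTRb
          simpa [if_neg hTR] using this
        rw [h2, iR, ← hLR]
      · intro hav
        rw [hth]
        have haR : Av P213 R := hav.sublist hsubR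
        exact av312_assemble (m := m) (X := []) (Y := Theta R) (by simp) hTRb
          (by simp) Av.nil (aR1 haR)
      · intro hav
        rw [hth]
        have haR : Av P312 R := hav.sublist hsubR
        exact av213_assemble' (m := m) (X := []) (Y := Theta R) (by simp) hTRb
          (by simp) Av.nil (aR2 haR)
    · -- main case
      rw [if_neg hL] at hth
      have hTL : Theta L ≠ [] := perm_ne_nil pL.symm hL
      have hheadL : m < L.headD 0 := hLb _ (headD_mem hL)
      have hheadTL : m < (Theta L).headD 0 := hTLb _ (headD_mem hTL)
      have hlastL : m < L.getLastD 0 := hLb _ (getLastD_mem hL)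
      have hlastTR : m < (Theta R).getLastD 0 := hTRb _ (getLastD_mem hTR)
      refine ⟨?_, ?_, ?_, ?_, ?_⟩
      · rw [hth, hLR]
        exact (pR.append (pL.cons m)).trans
          (List.perm_middle.trans (((List.perm_append_comm).cons m).trans List.perm_middle.symm))
      · rw [hth, hLR, dbl_append _ hTR, dbl_append _ hL]
        have h1 : (m :: Theta L).headD 0 = m := rfl
        have h2 : (m :: R).headD 0 = m := rfl
        rw [h1, h2, if_pos ⟨by simp, hlastTR⟩, if_pos ⟨by simp, hlastL⟩,
          dbl_cons m hTL, dbl_cons m hR, if_neg (by omega), if_neg (by omega), dL, dR,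
          ins_union, ins_union, Finset.union_comm]
      · rw [hth]
        have h2 : Theta (Theta R ++ m :: Theta L) = Theta (Theta L) ++ m :: Theta (Theta R) := by
          have := theta_eq (m := m) (Theta R) (Theta L) hTRb hTLb
          rw [this, if_neg hTL, if_neg hTR]
        rw [h2, iL, iR, ← hLR]
      · intro hav
        have hcross : ∀ x ∈ L, ∀ y ∈ R, y < x := by
          intro x hx y hy
          have hsub : [x, m, y] <+ l := by
            rw [hLR]
            exact List.Sublist.append (List.singleton_sublist.mpr hx)
              (List.cons_sublist_cons.mpr (List.singleton_sublist.mpr hy))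
          have := hav x m y hsub
          have h1 : m < x := hLb x hx
          have h2 : x ≠ y := hdisj x hx y hy
          simp only [P213] at this
          omega
        rw [hth]
        exact av312_assemble (m := m) (X := Theta R) (Y := Theta L) hTRb hTLb
          (fun x hx y hy => hcross y (pL.subset hy) x (pR.subset hx))
          (aR1 (hav.sublist hsubR)) (aL1 (hav.sublist hsubL))
      · intro hav
        have hcross : ∀ x ∈ L, ∀ y ∈ R, x < y := by
          intro x hx y hy
          have hsub : [x, m, y] <+ l := by
            rw [hLR]
            exact List.Sublist.append (List.singleton_sublist.mpr hx)
              (List.cons_sublist_cons.mpr (List.singleton_sublist.mpr hy))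
          have := hav x m y hsub
          have h1 : m < y := hRb y hy
          have h2 : x ≠ y := hdisj x hx y hy
          simp only [P312] at this
          omega
        rw [hth]
        exact av213_assemble' (m := m) (X := Theta R) (Y := Theta L) hTRb hTLb
          (fun x hx y hy => hcross y (pL.subset hy) x (pR.subset hx))
          (aR2 (hav.sublist hsubR)) (aL2 (hav.sublist hsubL))


theorem Phi_nil : Phi [] = [] := by rw [Phi]
theorem Psi_nil : Psi [] = [] := by rw [Psi]

/-- All properties of `Phi` and `Psi`, by strong induction on length. -/
theorem Phi_all : ∀ (N : ℕ) (l : List ℕ), l.length ≤ N → l.Nodup →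
    (Phi l).Perm l ∧ (Psi l).Perm l ∧
      (Av P231 l → Av P213 (Phi l) ∧ dbl (Phi l) = dbl l ∧ Psi (Phi l) = l) ∧
      (Av P213 l → Av P231 (Psi l) ∧ dbl (Psi l) = dbl l ∧ Phi (Psi l) = l) := by
  intro N
  induction N with
  | zero =>
    intro l hl _
    have : l = [] := List.length_eq_zero_iff.mp (Nat.le_zero.mp hl)
    subst this
    refine ⟨by simp [Phi_nil], by simp [Psi_nil], fun _ => ?_, fun _ => ?_⟩
    · exact ⟨by rw [Phi_nil]; exact Av.nil, by rw [Phi_nil], by rw [Phi_nil, Psi_nil]⟩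
    · exact ⟨by rw [Psi_nil]; exact Av.nil, by rw [Psi_nil], by rw [Psi_nil, Phi_nil]⟩
  | succ N ih =>
    intro l hl hn
    rcases l with _ | ⟨a, t⟩
    · refine ⟨by simp [Phi_nil], by simp [Psi_nil], fun _ => ?_, fun _ => ?_⟩
      · exact ⟨by rw [Phi_nil]; exact Av.nil, by rw [Phi_nil], by rw [Phi_nil, Psi_nil]⟩
      · exact ⟨by rw [Psi_nil]; exact Av.nil, by rw [Psi_nil], by rw [Psi_nil, Phi_nil]⟩
    set A := t.filter (· < a) with hAdef
    set C := t.filter (a < ·) with hCdef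
    have ha : a ∉ t := (List.nodup_cons.mp hn).1
    have ht : t.Nodup := (List.nodup_cons.mp hn).2
    have hA : ∀ x ∈ A, x < a := by
      intro x hx; rw [hAdef, List.mem_filter] at hx; simpa using hx.2
    have hC : ∀ x ∈ C, a < x := by
      intro x hx; rw [hCdef, List.mem_filter] at hx; simpa using hx.2
    have htlen : t.length ≤ N := by
      simp only [List.length_cons] at hl; omega
    have hAlen : A.length ≤ N := le_trans (List.length_filter_le _ _) htlen
    have hClen : C.length ≤ N := le_trans (List.length_filter_le _ _) htlen
    have hnA : A.Nodup := ht.filter _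
    have hnC : C.Nodup := ht.filter _
    obtain ⟨pPhiA, pPsiA, mA1, mA2⟩ := ih A hAlen hnA
    obtain ⟨pPhiC, pPsiC, mC1, mC2⟩ := ih C hClen hnC
    have hPhieq : Phi (a :: t) = a :: (Phi C ++ Phi A) := by rw [Phi]
    have hPsieq : Psi (a :: t) = a :: (Psi A ++ Psi C) := by rw [Psi]
    have hACt : (A ++ C).Perm t := filters_perm ha
    have hCAt : (C ++ A).Perm t := filters_perm' ha
    have hsubA : A <+ a :: t := (List.filter_sublist (l := t)).trans (List.sublist_cons_self a t)
    have hsubC : C <+ a :: t := (List.filter_sublist (l := t)).trans (List.sublist_cons_self a t)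
    have hPhiAb : ∀ x ∈ Phi A, x < a := fun x hx => hA x (pPhiA.subset hx)
    have hPhiCb : ∀ x ∈ Phi C, a < x := fun x hx => hC x (pPhiC.subset hx)
    have hPsiAb : ∀ x ∈ Psi A, x < a := fun x hx => hA x (pPsiA.subset hx)
    have hPsiCb : ∀ x ∈ Psi C, a < x := fun x hx => hC x (pPsiC.subset hx)
    refine ⟨?_, ?_, ?_, ?_⟩
    · rw [hPhieq]
      exact ((pPhiC.append pPhiA).trans hCAt).cons a
    · rw [hPsieq]
      exact ((pPsiA.append pPsiC).trans hACt).cons a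
    · -- 231 side
      intro hav
      have hshape : t = A ++ C := shape231 hav ha
      obtain ⟨avPhiA, dPhiA, psiPhiA⟩ := mA1 (hav.sublist hsubA)
      obtain ⟨avPhiC, dPhiC, psiPhiC⟩ := mC1 (hav.sublist hsubC)
      refine ⟨?_, ?_, ?_⟩
      · rw [hPhieq]
        exact av213_assemble hPhiCb hPhiAb avPhiC avPhiA
      · -- dbl
        rw [hPhieq]
        rcases eq_or_ne A [] with hA0 | hA0
        · have htC : t = C := by rw [hshape, hA0, List.nil_append]
          rcases eq_or_ne C [] with hC0 | hC0
          · rw [hA0, Phi_nil, hC0, Phi_nil, htC, hC0]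
            simp
          · have hPC : Phi C ≠ [] := perm_ne_nil pPhiC.symm hC0
            have e1 : (Phi C).headD 0 = C.headD 0 := Phi_headD C
            rw [hA0, Phi_nil, List.append_nil, htC, dbl_cons a hPC, dbl_cons a hC0,
              if_neg (by rw [e1]; have := hC _ (headD_mem hC0); omega),
              if_neg (by have := hC _ (headD_mem hC0); omega), dPhiC]
        · have hPA : Phi A ≠ [] := perm_ne_nil pPhiA.symm hA0
          have eA : (Phi A).headD 0 = A.headD 0 := Phi_headD A
          have hheadA : A.headD 0 < a := hA _ (headD_mem hA0)
          have htne : t ≠ [] := by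
            rw [hshape]; intro h; exact hA0 (List.append_eq_nil_iff.mp h).1
          have hheadt : t.headD 0 = A.headD 0 := by
            rw [hshape, headD_append _ hA0]
          rcases eq_or_ne C [] with hC0 | hC0
          · have htA : t = A := by rw [hshape, hC0, List.append_nil]
            rw [hC0, Phi_nil, List.nil_append, htA, dbl_cons a hPA, dbl_cons a hA0,
              if_pos (by rw [eA]; exact hheadA), if_pos hheadA, eA, dPhiA]
          · have hPC : Phi C ≠ [] := perm_ne_nil pPhiC.symm hC0
            have eC : (Phi C).headD 0 = C.headD 0 := Phi_headD C
            have hPCA : Phi C ++ Phi A ≠ [] := by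
              intro h; exact hPC (List.append_eq_nil_iff.mp h).1
            have hhead1 : (Phi C ++ Phi A).headD 0 = C.headD 0 := by
              rw [headD_append _ hPC, eC]
            have hheadC : a < C.headD 0 := hC _ (headD_mem hC0)
            have hlastPC : a < (Phi C).getLastD 0 := hPhiCb _ (getLastD_mem hPC)
            have hlastA : A.getLastD 0 < a := hA _ (getLastD_mem hA0)
            rw [dbl_cons a hPCA, hhead1, if_neg (by omega), dbl_append _ hPC,
              if_pos ⟨hPA, by rw [eA]; omega⟩, eA, dPhiA, dPhiC]
            rw [dbl_cons a htne, hheadt, if_pos hheadA, hshape, dbl_append _ hA0,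
              if_neg (by
                rintro ⟨-, hlt⟩
                have := hC _ (headD_mem hC0)
                have := hA _ (getLastD_mem hA0)
                omega)]
            exact ins_union _ _ _
      · -- Psi (Phi l) = l
        rw [hPhieq]
        have hPsieq2 : Psi (a :: (Phi C ++ Phi A)) =
            a :: (Psi ((Phi C ++ Phi A).filter (· < a)) ++
              Psi ((Phi C ++ Phi A).filter (a < ·))) := by rw [Psi]
        have f1a : (Phi C).filter (· < a) = [] :=
          List.filter_eq_nil_iff.mpr (fun x hx => by have := hPhiCb x hx; simp; omega)
        have f1b : (Phi A).filter (· < a) = Phi A :=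
          List.filter_eq_self.mpr (fun x hx => by have := hPhiAb x hx; simp; omega)
        have f2a : (Phi C).filter (a < ·) = Phi C :=
          List.filter_eq_self.mpr (fun x hx => by have := hPhiCb x hx; simp; omega)
        have f2b : (Phi A).filter (a < ·) = [] :=
          List.filter_eq_nil_iff.mpr (fun x hx => by have := hPhiAb x hx; simp; omega)
        have f1 : (Phi C ++ Phi A).filter (· < a) = Phi A := by
          rw [List.filter_append, f1a, f1b, List.nil_append]
        have f2 : (Phi C ++ Phi A).filter (a < ·) = Phi C := by
          rw [List.filter_append, f2a, f2b, List.append_nil]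
        rw [hPsieq2, f1, f2, psiPhiA, psiPhiC, ← hshape]
    · -- 213 side
      intro hav
      have hshape : t = C ++ A := shape213 hav ha
      obtain ⟨avPsiA, dPsiA, phiPsiA⟩ := mA2 (hav.sublist hsubA)
      obtain ⟨avPsiC, dPsiC, phiPsiC⟩ := mC2 (hav.sublist hsubC)
      refine ⟨?_, ?_, ?_⟩
      · rw [hPsieq]
        exact av231_assemble hPsiAb hPsiCb avPsiA avPsiC
      · -- dbl
        rw [hPsieq]
        rcases eq_or_ne A [] with hA0 | hA0
        · have htC : t = C := by rw [hshape, hA0, List.append_nil]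
          rcases eq_or_ne C [] with hC0 | hC0
          · rw [hA0, Psi_nil, hC0, Psi_nil, htC, hC0]
            simp
          · have hPC : Psi C ≠ [] := perm_ne_nil pPsiC.symm hC0
            have e1 : (Psi C).headD 0 = C.headD 0 := Psi_headD C
            rw [hA0, Psi_nil, List.nil_append, htC, dbl_cons a hPC, dbl_cons a hC0,
              if_neg (by rw [e1]; have := hC _ (headD_mem hC0); omega),
              if_neg (by have := hC _ (headD_mem hC0); omega), dPsiC]
        · have hPA : Psi A ≠ [] := perm_ne_nil pPsiA.symm hA0
          have eA : (Psi A).headD 0 = A.headD 0 := Psi_headD A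
          have hheadA : A.headD 0 < a := hA _ (headD_mem hA0)
          rcases eq_or_ne C [] with hC0 | hC0
          · have htA : t = A := by rw [hshape, hC0, List.nil_append]
            rw [hC0, Psi_nil, List.append_nil, htA, dbl_cons a hPA, dbl_cons a hA0,
              if_pos (by rw [eA]; exact hheadA), if_pos hheadA, eA, dPsiA]
          · have hPC : Psi C ≠ [] := perm_ne_nil pPsiC.symm hC0
            have eC : (Psi C).headD 0 = C.headD 0 := Psi_headD C
            have htne : t ≠ [] := by
              rw [hshape]; intro h; exact hC0 (List.append_eq_nil_iff.mp h).1
            have hheadt : t.headD 0 = C.headD 0 := by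
              rw [hshape, headD_append _ hC0]
            have hPAC : Psi A ++ Psi C ≠ [] := by
              intro h; exact hPA (List.append_eq_nil_iff.mp h).1
            have hhead1 : (Psi A ++ Psi C).headD 0 = A.headD 0 := by
              rw [headD_append _ hPA, eA]
            have hheadC : a < C.headD 0 := hC _ (headD_mem hC0)
            have hlastPA : (Psi A).getLastD 0 < a := hPsiAb _ (getLastD_mem hPA)
            have hlastC : a < C.getLastD 0 := hC _ (getLastD_mem hC0)
            rw [dbl_cons a hPAC, hhead1, if_pos hheadA, dbl_append _ hPA,
              if_neg (by
                rintro ⟨-, hlt⟩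
                rw [eC] at hlt
                omega), dPsiA, dPsiC]
            rw [dbl_cons a htne, hheadt, if_neg (by omega), hshape, dbl_append _ hC0,
              if_pos ⟨hA0, by omega⟩]
            exact (ins_union _ _ _).symm
      · -- Phi (Psi l) = l
        rw [hPsieq]
        have hPhieq2 : Phi (a :: (Psi A ++ Psi C)) =
            a :: (Phi ((Psi A ++ Psi C).filter (a < ·)) ++
              Phi ((Psi A ++ Psi C).filter (· < a))) := by rw [Phi]
        have f1a : (Psi A).filter (a < ·) = [] :=
          List.filter_eq_nil_iff.mpr (fun x hx => by have := hPsiAb x hx; simp; omega)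
        have f1b : (Psi C).filter (a < ·) = Psi C :=
          List.filter_eq_self.mpr (fun x hx => by have := hPsiCb x hx; simp; omega)
        have f2a : (Psi A).filter (· < a) = Psi A :=
          List.filter_eq_self.mpr (fun x hx => by have := hPsiAb x hx; simp; omega)
        have f2b : (Psi C).filter (· < a) = [] :=
          List.filter_eq_nil_iff.mpr (fun x hx => by have := hPsiCb x hx; simp; omega)
        have f1 : (Psi A ++ Psi C).filter (a < ·) = Psi C := by
          rw [List.filter_append, f1a, f1b, List.nil_append]
        have f2 : (Psi A ++ Psi C).filter (· < a) = Psi A := by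
          rw [List.filter_append, f2a, f2b, List.append_nil]
        rw [hPhieq2, f1, f2, phiPsiA, phiPsiC, ← hshape]


/-! ### Counting layer -/

noncomputable def permsOf (S : Finset ℕ) : Finset (List ℕ) :=
  (S.sort (· ≤ ·)).permutations.toFinset

theorem mem_permsOf {S : Finset ℕ} {l : List ℕ} :
    l ∈ permsOf S ↔ l.Perm (S.sort (· ≤ ·)) := by
  rw [permsOf, List.mem_toFinset, List.mem_permutations]

theorem nodup_of_mem_permsOf {S : Finset ℕ} {l : List ℕ} (h : l ∈ permsOf S) : l.Nodup :=
  (mem_permsOf.mp h).nodup_iff.mpr (S.sort_nodup _)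

theorem card_bij_lists (S B : Finset ℕ) (P Q : List ℕ → Prop) (F G : List ℕ → List ℕ)
    (hF : ∀ l, l.Nodup → P l → Q (F l) ∧ dbl (F l) = dbl l ∧ (F l).Perm l ∧ G (F l) = l)
    (hG : ∀ l, l.Nodup → Q l → P (G l) ∧ dbl (G l) = dbl l ∧ (G l).Perm l ∧ F (G l) = l) :
    ((permsOf S).filter (fun l => P l ∧ dbl l = B)).card
      = ((permsOf S).filter (fun l => Q l ∧ dbl l = B)).card := by
  apply Finset.card_bij' (fun l _ => F l) (fun l _ => G l)
  · intro a ha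
    rw [Finset.mem_filter] at ha ⊢
    obtain ⟨hmem, hP, hdbl⟩ := ha
    obtain ⟨h1, h2, h3, _⟩ := hF a (nodup_of_mem_permsOf hmem) hP
    exact ⟨mem_permsOf.mpr (h3.trans (mem_permsOf.mp hmem)), h1, h2.trans hdbl⟩
  · intro a ha
    rw [Finset.mem_filter] at ha ⊢
    obtain ⟨hmem, hQ', hdbl⟩ := ha
    obtain ⟨h1, h2, h3, _⟩ := hG a (nodup_of_mem_permsOf hmem) hQ'
    exact ⟨mem_permsOf.mpr (h3.trans (mem_permsOf.mp hmem)), h1, h2.trans hdbl⟩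
  · intro a ha
    rw [Finset.mem_filter] at ha
    exact (hF a (nodup_of_mem_permsOf ha.1) ha.2.1).2.2.2
  · intro a ha
    rw [Finset.mem_filter] at ha
    exact (hG a (nodup_of_mem_permsOf ha.1) ha.2.1).2.2.2

theorem count_lists_213_231 (S B : Finset ℕ) :
    ((permsOf S).filter (fun l => Av P213 l ∧ dbl l = B)).card
      = ((permsOf S).filter (fun l => Av P231 l ∧ dbl l = B)).card := by
  apply card_bij_lists S B _ _ Psi Phi
  · intro l hn hav
    obtain ⟨hp1, hp2, _, h4⟩ := Phi_all l.length l le_rfl hn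
    obtain ⟨a1, a2, a3⟩ := h4 hav
    exact ⟨a1, a2, hp2, a3⟩
  · intro l hn hav
    obtain ⟨hp1, hp2, h3, _⟩ := Phi_all l.length l le_rfl hn
    obtain ⟨a1, a2, a3⟩ := h3 hav
    exact ⟨a1, a2, hp1, a3⟩

theorem count_lists_213_312 (S B : Finset ℕ) :
    ((permsOf S).filter (fun l => Av P213 l ∧ dbl l = B)).card
      = ((permsOf S).filter (fun l => Av P312 l ∧ dbl l = B)).card := by
  apply card_bij_lists S B _ _ Theta Theta
  · intro l hn hav
    obtain ⟨hp, hd, hi, ha1, _⟩ := Theta_all l.length l le_rfl hn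
    exact ⟨ha1 hav, hd, hp, hi⟩
  · intro l hn hav
    obtain ⟨hp, hd, hi, _, ha2⟩ := Theta_all l.length l le_rfl hn
    exact ⟨ha2 hav, hd, hp, hi⟩

/-! ### positional description of `dbl` -/

theorem mem_dbl : ∀ (l : List ℕ) (x : ℕ), x ∈ dbl l ↔
    ∃ i, i + 1 < l.length ∧ l.getD (i + 1) 0 < l.getD i 0 ∧ x = l.getD (i + 1) 0 := by
  intro l
  induction l with
  | nil => intro x; simp
  | cons a t ih =>
    intro x
    cases t with
    | nil =>
      simp [dbl]
    | cons b t' =>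
      rw [dbl_cons_cons]
      constructor
      · intro hx
        by_cases hba : b < a
        · rw [if_pos hba, Finset.mem_insert] at hx
          rcases hx with rfl | hx
          · exact ⟨0, by simp [List.length_cons], by simpa using hba, by simp⟩
          · obtain ⟨i, h1, h2, h3⟩ := (ih x).mp hx
            exact ⟨i + 1, by simpa using h1, by simpa using h2, by simpa using h3⟩
        · rw [if_neg hba] at hx
          obtain ⟨i, h1, h2, h3⟩ := (ih x).mp hx
          exact ⟨i + 1, by simpa using h1, by simpa using h2, by simpa using h3⟩
      · rintro ⟨i, h1, h2, h3⟩
        cases i with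
        | zero =>
          simp only [List.getD_cons_succ, List.getD_cons_zero] at h2 h3
          rw [if_pos h2]
          exact h3 ▸ Finset.mem_insert_self _ _
        | succ j =>
          have hmem : x ∈ dbl (b :: t') := (ih x).mpr
            ⟨j, by simpa using h1, by simpa using h2, by simpa using h3⟩
          by_cases hba : b < a
          · rw [if_pos hba]; exact Finset.mem_insert_of_mem hmem
          · rw [if_neg hba]; exact hmem


/-! ### Transfer to `Equiv.Perm (Fin n)` -/

variable {n : ℕ}

def listOf (σ : Equiv.Perm (Fin n)) : List ℕ :=
  (List.finRange n).map (fun i => (σ i : ℕ) + 1)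

theorem listOf_length (σ : Equiv.Perm (Fin n)) : (listOf σ).length = n := by
  simp [listOf]

theorem listOf_getElem (σ : Equiv.Perm (Fin n)) {i : ℕ} (hi : i < (listOf σ).length) :
    (listOf σ)[i] = (σ ⟨i, by rwa [listOf_length] at hi⟩ : ℕ) + 1 := by
  simp [listOf, List.getElem_map, List.getElem_finRange, Fin.cast]

theorem listOf_getD (σ : Equiv.Perm (Fin n)) {i : ℕ} (hi : i < n) :
    (listOf σ).getD i 0 = (σ ⟨i, hi⟩ : ℕ) + 1 := by
  have hlen : i < (listOf σ).length := by rwa [listOf_length]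
  rw [List.getD_eq_getElem _ _ hlen, listOf_getElem]

theorem listOf_nodup (σ : Equiv.Perm (Fin n)) : (listOf σ).Nodup := by
  apply (List.nodup_finRange n).map
  intro i j hij
  simp only at hij
  exact σ.injective (Fin.ext (by omega))

theorem listOf_toFinset (σ : Equiv.Perm (Fin n)) :
    (listOf σ).toFinset = Finset.Icc 1 n := by
  ext x
  rw [List.mem_toFinset, Finset.mem_Icc]
  simp only [listOf, List.mem_map, List.mem_finRange, true_and]
  constructor
  · rintro ⟨i, rfl⟩
    have := (σ i).isLt
    omega
  · rintro ⟨h1, h2⟩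
    refine ⟨σ.symm ⟨x - 1, by omega⟩, ?_⟩
    rw [Equiv.apply_symm_apply]
    show x - 1 + 1 = x
    omega

theorem listOf_mem_permsOf (σ : Equiv.Perm (Fin n)) :
    listOf σ ∈ permsOf (Finset.Icc 1 n) :=
  mem_permsOf.mpr (List.perm_of_nodup_nodup_toFinset_eq (listOf_nodup σ)
    (Finset.sort_nodup _ _) (by rw [listOf_toFinset, Finset.sort_toFinset]))

theorem listOf_injective : Function.Injective (listOf (n := n)) := by
  intro σ τ h
  apply Equiv.ext
  intro i
  have hi : (i : ℕ) < n := i.isLt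
  have h2 := congrArg (fun l => l.getD (i : ℕ) 0) h
  simp only [listOf_getD σ hi, listOf_getD τ hi] at h2
  have h3 : σ ⟨i, hi⟩ = τ ⟨i, hi⟩ := Fin.ext (by omega)
  simpa using h3

theorem exists_perm_of_mem {l : List ℕ} (hl : l ∈ permsOf (Finset.Icc 1 n)) :
    ∃ σ : Equiv.Perm (Fin n), listOf σ = l := by
  have hperm := mem_permsOf.mp hl
  have hlen : l.length = n := by
    rw [hperm.length_eq, Finset.length_sort, Nat.card_Icc]
    omega
  have hnodup : l.Nodup := nodup_of_mem_permsOf hl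
  have hmem : ∀ x ∈ l, 1 ≤ x ∧ x ≤ n := by
    intro x hx
    have hx2 : x ∈ Finset.Icc 1 n := by
      have := hperm.subset hx
      rwa [Finset.mem_sort] at this
    exact Finset.mem_Icc.mp hx2
  have hget : ∀ i : Fin n, l.getD (i : ℕ) 0 ∈ l := by
    intro i
    have hilt : (i : ℕ) < l.length := by rw [hlen]; exact i.isLt
    rw [List.getD_eq_getElem _ _ hilt]
    exact List.getElem_mem hilt
  have hub : ∀ i : Fin n, l.getD (i : ℕ) 0 - 1 < n := by
    intro i
    have := hmem _ (hget i)
    omega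
  set g : Fin n → Fin n := fun i => ⟨l.getD (i : ℕ) 0 - 1, hub i⟩ with hg
  have hginj : Function.Injective g := by
    intro i j hij
    have h1 : (i : ℕ) < l.length := by rw [hlen]; exact i.isLt
    have h2 : (j : ℕ) < l.length := by rw [hlen]; exact j.isLt
    have hv1 := hmem _ (hget i)
    have hv2 := hmem _ (hget j)
    have : l.getD (i : ℕ) 0 = l.getD (j : ℕ) 0 := by
      have := congrArg Fin.val hij
      simp only [hg] at this
      omega
    rw [List.getD_eq_getElem _ _ h1, List.getD_eq_getElem _ _ h2] at this
    exact Fin.ext ((hnodup.getElem_inj_iff).mp this)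
  refine ⟨Equiv.ofBijective g (Finite.injective_iff_bijective.mp hginj), ?_⟩
  apply List.ext_getElem (by rw [listOf_length, hlen])
  intro k h1 h2
  have hkn : k < n := by rwa [listOf_length] at h1
  rw [listOf_getElem]
  have : (Equiv.ofBijective g (Finite.injective_iff_bijective.mp hginj)) ⟨k, hkn⟩ = g ⟨k, hkn⟩ := rfl
  rw [this]
  simp only [hg]
  have hv := hmem _ (hget ⟨k, hkn⟩)
  rw [List.getD_eq_getElem _ _ (by rwa [hlen] : (k : ℕ) < l.length)] at hv ⊢
  omega

theorem entry_eq (σ : Equiv.Perm (Fin n)) {i : ℕ} (h1 : 1 ≤ i) (h2 : i ≤ n) :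
    entry σ i = (listOf σ).getD (i - 1) 0 := by
  rw [entry, dif_pos (show i - 1 < n by omega), listOf_getD σ (show i - 1 < n by omega)]

theorem desbot_eq (σ : Equiv.Perm (Fin n)) : Desbot σ = dbl (listOf σ) := by
  ext x
  rw [mem_dbl]
  simp only [Desbot, Des, Finset.mem_image, Finset.mem_filter, Finset.mem_Icc]
  constructor
  · rintro ⟨i, ⟨⟨hi1, hi2⟩, hlt⟩, hx⟩
    have hn1 : 1 ≤ n := by omega
    have e1 : entry σ i = (listOf σ).getD (i - 1) 0 := entry_eq σ hi1 (by omega)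
    have e2 : entry σ (i + 1) = (listOf σ).getD i 0 := by
      rw [entry_eq σ (by omega) (by omega), show i + 1 - 1 = i from by omega]
    refine ⟨i - 1, ?_, ?_, ?_⟩
    · rw [listOf_length]; omega
    · rw [show i - 1 + 1 = i by omega, ← e2, ← e1]; exact hlt
    · rw [show i - 1 + 1 = i by omega, ← e2]; exact hx.symm
  · rintro ⟨j, hj, hlt, hx⟩
    rw [listOf_length] at hj
    have e1 : entry σ (j + 1) = (listOf σ).getD j 0 := by
      rw [entry_eq σ (by omega) (by omega), show j + 1 - 1 = j from by omega]
    have e2 : entry σ (j + 2) = (listOf σ).getD (j + 1) 0 := by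
      rw [entry_eq σ (by omega) (by omega), show j + 2 - 1 = j + 1 from by omega]
    refine ⟨j + 1, ⟨⟨by omega, by omega⟩, ?_⟩, ?_⟩
    · rw [show j + 1 + 1 = j + 2 from rfl, e1, e2]; exact hlt
    · rw [show j + 1 + 1 = j + 2 from rfl, e2]; exact hx.symm

theorem sublist3_listOf (σ : Equiv.Perm (Fin n)) {i j k : Fin n} (hij : i < j) (hjk : j < k) :
    [(σ i : ℕ) + 1, (σ j : ℕ) + 1, (σ k : ℕ) + 1] <+ listOf σ := by
  have hi : (i : ℕ) < (listOf σ).length := by rw [listOf_length]; exact i.isLt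
  have hj : (j : ℕ) < (listOf σ).length := by rw [listOf_length]; exact j.isLt
  have hk : (k : ℕ) < (listOf σ).length := by rw [listOf_length]; exact k.isLt
  have hpw : List.Pairwise (fun a b : Fin (listOf σ).length => (a : ℕ) < (b : ℕ))
      [⟨i, hi⟩, ⟨j, hj⟩, ⟨k, hk⟩] := by
    refine List.pairwise_cons.mpr ⟨?_, List.pairwise_cons.mpr ⟨?_,
      List.pairwise_cons.mpr ⟨by simp, List.Pairwise.nil⟩⟩⟩
    · intro b hb
      rcases List.mem_cons.mp hb with rfl | hb
      · exact hij
      rcases List.mem_singleton.mp hb with rfl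
      exact hij.trans hjk
    · intro b hb
      rcases List.mem_singleton.mp hb with rfl
      exact hjk
  have hs := List.map_getElem_sublist hpw
  simpa only [List.map_cons, List.map_nil, Fin.getElem_fin, listOf_getElem] using hs

theorem extract3 {l : List ℕ} {x y z : ℕ} (h : [x, y, z] <+ l) :
    ∃ i j k, i < j ∧ j < k ∧ k < l.length ∧
      x = l.getD i 0 ∧ y = l.getD j 0 ∧ z = l.getD k 0 := by
  obtain ⟨is, heq, hpw⟩ := List.sublist_eq_map_getElem h
  rcases is with _ | ⟨a, _ | ⟨b, _ | ⟨c, _ | ⟨d, e⟩⟩⟩⟩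
  · exfalso; have := congrArg List.length heq; simp at this
  · exfalso; have := congrArg List.length heq; simp at this
  · exfalso; have := congrArg List.length heq; simp at this
  · have hab : (a : ℕ) < b := List.rel_of_pairwise_cons hpw (by simp)
    have hbc : (b : ℕ) < c := List.rel_of_pairwise_cons hpw.of_cons (by simp)
    simp only [List.map_cons, List.map_nil, List.cons.injEq, and_true,
      Fin.getElem_fin] at heq
    obtain ⟨hx, hy, hz⟩ := heq
    refine ⟨a, b, c, hab, hbc, c.isLt, ?_, ?_, ?_⟩
    · rw [List.getD_eq_getElem _ _ a.isLt]; exact hx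
    · rw [List.getD_eq_getElem _ _ b.isLt]; exact hy
    · rw [List.getD_eq_getElem _ _ c.isLt]; exact hz
  · exfalso; have := congrArg List.length heq; simp at this

theorem contains_of_triple (π : Fin 3 → Fin 3) (σ : Equiv.Perm (Fin n)) {i j k : Fin n}
    (hij : i < j) (hjk : j < k)
    (h01 : π 0 < π 1 ↔ σ i < σ j) (h02 : π 0 < π 2 ↔ σ i < σ k)
    (h12 : π 1 < π 2 ↔ σ j < σ k) (h10 : π 1 < π 0 ↔ σ j < σ i)
    (h20 : π 2 < π 0 ↔ σ k < σ i) (h21 : π 2 < π 1 ↔ σ k < σ j) :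
    Contains π σ := by
  refine ⟨![i, j, k], ?_, ?_⟩
  · intro a b hab
    fin_cases a <;> fin_cases b <;>
      first
      | exact absurd hab (by decide)
      | exact hij
      | exact hjk
      | exact hij.trans hjk
  · intro a b
    fin_cases a <;> fin_cases b
    · exact iff_of_false (lt_irrefl _) (lt_irrefl _)
    · exact h01
    · exact h02
    · exact h10
    · exact iff_of_false (lt_irrefl _) (lt_irrefl _)
    · exact h12
    · exact h20
    · exact h21
    · exact iff_of_false (lt_irrefl _) (lt_irrefl _)

theorem avoids_iff_213 (σ : Equiv.Perm (Fin n)) :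
    AvoidsPat (![1, 0, 2] : Fin 3 → Fin 3) σ ↔ Av P213 (listOf σ) := by
  constructor
  · intro hA x y z hs hp
    apply hA
    obtain ⟨i, j, k, hij, hjk, hk, hx, hy, hz⟩ := extract3 hs
    rw [listOf_length] at hk
    have hi : i < n := by omega
    have hj : j < n := by omega
    rw [listOf_getD σ hi] at hx
    rw [listOf_getD σ hj] at hy
    rw [listOf_getD σ hk] at hz
    obtain ⟨h1, h2⟩ := hp
    have hd1 : (σ ⟨j, hj⟩ : ℕ) < (σ ⟨i, hi⟩ : ℕ) := by omega
    have hd2 : (σ ⟨i, hi⟩ : ℕ) < (σ ⟨k, hk⟩ : ℕ) := by omega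
    refine contains_of_triple _ σ (i := ⟨i, hi⟩) (j := ⟨j, hj⟩) (k := ⟨k, hk⟩)
      (Fin.mk_lt_mk.mpr hij) (Fin.mk_lt_mk.mpr hjk) ?_ ?_ ?_ ?_ ?_ ?_ <;>
      first
      | exact iff_of_true (by decide) (by simp only [Fin.lt_def]; omega)
      | exact iff_of_false (by decide) (by simp only [Fin.lt_def]; omega)
  · intro hA hC
    obtain ⟨f, hmono, hiff⟩ := hC
    have h01 : f 0 < f 1 := hmono (by decide)
    have h12 : f 1 < f 2 := hmono (by decide)
    have hu : (σ (f 1) : ℕ) < (σ (f 0) : ℕ) := (hiff 1 0).mp (by decide)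
    have hv : (σ (f 0) : ℕ) < (σ (f 2) : ℕ) := (hiff 0 2).mp (by decide)
    exact hA _ _ _ (sublist3_listOf σ h01 h12) ⟨by omega, by omega⟩

theorem avoids_iff_231 (σ : Equiv.Perm (Fin n)) :
    AvoidsPat (![1, 2, 0] : Fin 3 → Fin 3) σ ↔ Av P231 (listOf σ) := by
  constructor
  · intro hA x y z hs hp
    apply hA
    obtain ⟨i, j, k, hij, hjk, hk, hx, hy, hz⟩ := extract3 hs
    rw [listOf_length] at hk
    have hi : i < n := by omega
    have hj : j < n := by omega
    rw [listOf_getD σ hi] at hx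
    rw [listOf_getD σ hj] at hy
    rw [listOf_getD σ hk] at hz
    obtain ⟨h1, h2⟩ := hp
    have hd1 : (σ ⟨i, hi⟩ : ℕ) < (σ ⟨j, hj⟩ : ℕ) := by omega
    have hd2 : (σ ⟨k, hk⟩ : ℕ) < (σ ⟨i, hi⟩ : ℕ) := by omega
    refine contains_of_triple _ σ (i := ⟨i, hi⟩) (j := ⟨j, hj⟩) (k := ⟨k, hk⟩)
      (Fin.mk_lt_mk.mpr hij) (Fin.mk_lt_mk.mpr hjk) ?_ ?_ ?_ ?_ ?_ ?_ <;>
      first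
      | exact iff_of_true (by decide) (by simp only [Fin.lt_def]; omega)
      | exact iff_of_false (by decide) (by simp only [Fin.lt_def]; omega)
  · intro hA hC
    obtain ⟨f, hmono, hiff⟩ := hC
    have h01 : f 0 < f 1 := hmono (by decide)
    have h12 : f 1 < f 2 := hmono (by decide)
    have hu : (σ (f 0) : ℕ) < (σ (f 1) : ℕ) := (hiff 0 1).mp (by decide)
    have hv : (σ (f 2) : ℕ) < (σ (f 0) : ℕ) := (hiff 2 0).mp (by decide)
    exact hA _ _ _ (sublist3_listOf σ h01 h12) ⟨by omega, by omega⟩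

theorem avoids_iff_312 (σ : Equiv.Perm (Fin n)) :
    AvoidsPat (![2, 0, 1] : Fin 3 → Fin 3) σ ↔ Av P312 (listOf σ) := by
  constructor
  · intro hA x y z hs hp
    apply hA
    obtain ⟨i, j, k, hij, hjk, hk, hx, hy, hz⟩ := extract3 hs
    rw [listOf_length] at hk
    have hi : i < n := by omega
    have hj : j < n := by omega
    rw [listOf_getD σ hi] at hx
    rw [listOf_getD σ hj] at hy
    rw [listOf_getD σ hk] at hz
    obtain ⟨h1, h2⟩ := hp
    have hd1 : (σ ⟨j, hj⟩ : ℕ) < (σ ⟨k, hk⟩ : ℕ) := by omega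
    have hd2 : (σ ⟨k, hk⟩ : ℕ) < (σ ⟨i, hi⟩ : ℕ) := by omega
    refine contains_of_triple _ σ (i := ⟨i, hi⟩) (j := ⟨j, hj⟩) (k := ⟨k, hk⟩)
      (Fin.mk_lt_mk.mpr hij) (Fin.mk_lt_mk.mpr hjk) ?_ ?_ ?_ ?_ ?_ ?_ <;>
      first
      | exact iff_of_true (by decide) (by simp only [Fin.lt_def]; omega)
      | exact iff_of_false (by decide) (by simp only [Fin.lt_def]; omega)
  · intro hA hC
    obtain ⟨f, hmono, hiff⟩ := hC
    have h01 : f 0 < f 1 := hmono (by decide)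
    have h12 : f 1 < f 2 := hmono (by decide)
    have hu : (σ (f 1) : ℕ) < (σ (f 2) : ℕ) := (hiff 1 2).mp (by decide)
    have hv : (σ (f 2) : ℕ) < (σ (f 0) : ℕ) := (hiff 2 0).mp (by decide)
    exact hA _ _ _ (sublist3_listOf σ h01 h12) ⟨by omega, by omega⟩

theorem count_perm_eq (π : Fin 3 → Fin 3) (P : ℕ → ℕ → ℕ → Prop)
    (hiff : ∀ σ : Equiv.Perm (Fin n), AvoidsPat π σ ↔ Av P (listOf σ)) (B : Finset ℕ) :
    ((Finset.univ : Finset (Equiv.Perm (Fin n))).filter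
        (fun σ => AvoidsPat π σ ∧ Desbot σ = B)).card
      = ((permsOf (Finset.Icc 1 n)).filter (fun l => Av P l ∧ dbl l = B)).card := by
  apply Finset.card_bij (fun σ _ => listOf σ)
  · intro σ hσ
    rw [Finset.mem_filter] at hσ ⊢
    obtain ⟨-, h1, h2⟩ := hσ
    exact ⟨listOf_mem_permsOf σ, (hiff σ).mp h1, by rw [← desbot_eq, h2]⟩
  · intro σ₁ h₁ σ₂ h₂ he
    exact listOf_injective he
  · intro l hl
    rw [Finset.mem_filter] at hl
    obtain ⟨hmem, h1, h2⟩ := hl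
    obtain ⟨σ, rfl⟩ := exists_perm_of_mem hmem
    refine ⟨σ, ?_, rfl⟩
    rw [Finset.mem_filter]
    exact ⟨Finset.mem_univ σ, (hiff σ).mpr h1, by rw [desbot_eq, h2]⟩

end DWAux

/-- The patterns 213, 231, 312 are Desbot-Wilf equivalent. -/
theorem desbot_wilf_213_231_312 (n : ℕ) (B : Finset ℕ) (hB : B ⊆ Finset.Icc 1 n) :
    ((Finset.univ : Finset (Equiv.Perm (Fin n))).filter
        (fun σ => AvoidsPat (![1, 0, 2] : Fin 3 → Fin 3) σ ∧ Desbot σ = B)).card =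
      ((Finset.univ : Finset (Equiv.Perm (Fin n))).filter
        (fun σ => AvoidsPat (![1, 2, 0] : Fin 3 → Fin 3) σ ∧ Desbot σ = B)).card ∧
    ((Finset.univ : Finset (Equiv.Perm (Fin n))).filter
        (fun σ => AvoidsPat (![1, 2, 0] : Fin 3 → Fin 3) σ ∧ Desbot σ = B)).card =
      ((Finset.univ : Finset (Equiv.Perm (Fin n))).filter
        (fun σ => AvoidsPat (![2, 0, 1] : Fin 3 → Fin 3) σ ∧ Desbot σ = B)).card := by
  constructor
  · rw [DWAux.count_perm_eq _ DWAux.P213 DWAux.avoids_iff_213 B,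
      DWAux.count_perm_eq _ DWAux.P231 DWAux.avoids_iff_231 B]
    exact DWAux.count_lists_213_231 _ B
  · rw [DWAux.count_perm_eq _ DWAux.P231 DWAux.avoids_iff_231 B,
      DWAux.count_perm_eq _ DWAux.P312 DWAux.avoids_iff_312 B,
      ← DWAux.count_lists_213_231 _ B, DWAux.count_lists_213_312 _ B]
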